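/- arXiv:1307.5013 — 2 statements merged into one kernel-verified Lean document; each statement's English description precedes it below -/
import Mathlib

section
/- Let 0 < b < a and A ≥ 0 be real numbers. There exists a constant C = C(A,a,b) such that: for every r₀ > 0, every B ≥ 0, and every nonnegative nondecreasing function Φ on (0,r₀] satisfying Φ(ρ) ≤ A (ρ/r)^a Φ(r) + B r^b for all 0 < ρ < r ≤ r₀, one has Φ(r) ≤ C r^b ( r₀^{-b} Φ(r₀) + B ) for all r ∈ (0, r₀). -/
/-- Let `0 < b < a` and `A ≥ 0`. There exists a constant `C = C(A,a,b)`
such that for every `r₀ > 0`, every `B ≥ 0` and every nonnegative nondecreasing function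
`Φ` on `(0, r₀]` satisfying `Φ(ρ) ≤ A (ρ/r)^a Φ(r) + B r^b` for all `0 < ρ < r ≤ r₀`,
one has `Φ(r) ≤ C r^b (r₀^{-b} Φ(r₀) + B)` for all `r ∈ (0, r₀)`. -/
theorem statement_0 (a b A : ℝ) (hb : 0 < b) (hba : b < a) (hA : 0 ≤ A) :
    ∃ C : ℝ, 0 < C ∧
      ∀ r₀ : ℝ, 0 < r₀ → ∀ B : ℝ, 0 ≤ B → ∀ Φ : ℝ → ℝ,
        (∀ r ∈ Set.Ioc (0 : ℝ) r₀, 0 ≤ Φ r) →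
        (∀ r ∈ Set.Ioc (0 : ℝ) r₀, ∀ s ∈ Set.Ioc (0 : ℝ) r₀, r ≤ s → Φ r ≤ Φ s) →
        (∀ ρ r : ℝ, 0 < ρ → ρ < r → r ≤ r₀ →
          Φ ρ ≤ A * (ρ / r) ^ a * Φ r + B * r ^ b) →
        ∀ r ∈ Set.Ioo (0 : ℝ) r₀, Φ r ≤ C * r ^ b * (r₀ ^ (-b) * Φ r₀ + B) := by
  have hε : 0 < a - b := by linarith
  -- choose τ ∈ (0, 1/2] with A τ^(a-b) ≤ 1/2
  obtain ⟨τ, hτ0, hτhalf, hτdec⟩ : ∃ τ : ℝ, 0 < τ ∧ τ ≤ 1/2 ∧ A * τ ^ (a - b) ≤ 1/2 := by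
    refine ⟨min (1/2) ((2*(A+1))⁻¹ ^ (a-b)⁻¹), ?_, min_le_left _ _, ?_⟩
    · have : (0:ℝ) < (2*(A+1))⁻¹ ^ (a-b)⁻¹ := Real.rpow_pos_of_pos (by positivity) _
      positivity
    · have hx : (0:ℝ) < (2*(A+1))⁻¹ := by positivity
      have h1 : min (1/2) ((2*(A+1))⁻¹ ^ (a-b)⁻¹) ≤ (2*(A+1))⁻¹ ^ (a-b)⁻¹ :=
        min_le_right _ _
      have h2 : (min (1/2) ((2*(A+1))⁻¹ ^ (a-b)⁻¹)) ^ (a-b)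
          ≤ ((2*(A+1))⁻¹ ^ (a-b)⁻¹) ^ (a-b) :=
        Real.rpow_le_rpow (le_min (by norm_num) (Real.rpow_nonneg hx.le _)) h1 hε.le
      have h3 : ((2*(A+1))⁻¹ ^ (a-b)⁻¹ : ℝ) ^ (a-b) = (2*(A+1))⁻¹ := by
        rw [← Real.rpow_mul hx.le, inv_mul_cancel₀ hε.ne', Real.rpow_one]
      rw [h3] at h2
      have h4 : A * (min (1/2) ((2*(A+1))⁻¹ ^ (a-b)⁻¹)) ^ (a-b) ≤ A * (2*(A+1))⁻¹ :=
        mul_le_mul_of_nonneg_left h2 hA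
      have h5 : A * (2*(A+1))⁻¹ ≤ 1/2 := by
        rw [inv_eq_one_div, mul_one_div, div_le_div_iff₀ (by positivity) (by norm_num)]
        linarith
      linarith
  have hτ1 : τ < 1 := by linarith
  set u : ℝ := τ ^ b with hu_def
  have hu0 : 0 < u := Real.rpow_pos_of_pos hτ0 _
  have hu1 : u ≤ 1 := Real.rpow_le_one hτ0.le hτ1.le hb.le
  have hτa : A * τ ^ a ≤ 1/2 * u := by
    have : τ ^ a = τ ^ (a-b) * u := by
      rw [hu_def, ← Real.rpow_add hτ0]; ring_nf
    rw [this, ← mul_assoc]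
    exact mul_le_mul_of_nonneg_right hτdec hu0.le
  have hpow : ∀ k : ℕ, ((τ:ℝ)^k) ^ b = u ^ k := by
    intro k
    rw [← Real.rpow_natCast τ k, ← Real.rpow_natCast u k, hu_def,
      ← Real.rpow_mul hτ0.le, ← Real.rpow_mul hτ0.le, mul_comm]
  refine ⟨2 * u⁻¹ * u⁻¹, by positivity, ?_⟩
  intro r₀ hr₀ B hB Φ hΦ0 hmono hdecay r hr
  obtain ⟨hr0, hrr₀⟩ := hr
  set M : ℝ := Φ r₀ + 2 * u⁻¹ * (B * r₀ ^ b) with hM_def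
  have hΦr₀ : 0 ≤ Φ r₀ := hΦ0 r₀ ⟨hr₀, le_refl _⟩
  have hM0 : 0 ≤ M := by positivity
  have hmem : ∀ k : ℕ, τ^k * r₀ ∈ Set.Ioc (0:ℝ) r₀ := by
    intro k
    constructor
    · positivity
    · calc τ^k * r₀ ≤ 1 * r₀ := by
            apply mul_le_mul_of_nonneg_right _ hr₀.le
            exact pow_le_one₀ hτ0.le hτ1.le
        _ = r₀ := one_mul r₀
  -- key iteration
  have key : ∀ k : ℕ, Φ (τ^k * r₀) ≤ M * u^k := by
    intro k
    induction k with
    | zero => simp [hM_def]; positivity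
    | succ k ih =>
      have hlt : τ^(k+1) * r₀ < τ^k * r₀ := by
        apply mul_lt_mul_of_pos_right _ hr₀
        exact pow_lt_pow_right_of_lt_one₀ hτ0 hτ1 (Nat.lt_succ_self k)
      have h1 := hdecay (τ^(k+1) * r₀) (τ^k * r₀) (by positivity) hlt (hmem k).2
      have hratio : τ^(k+1) * r₀ / (τ^k * r₀) = τ := by
        rw [pow_succ]
        field_simp
      rw [hratio] at h1
      have h2 : (τ^k * r₀) ^ b = u^k * r₀ ^ b := by
        rw [Real.mul_rpow (by positivity) hr₀.le, hpow k]
      rw [h2] at h1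
      have hΦk : 0 ≤ Φ (τ^k * r₀) := hΦ0 _ (hmem k)
      have h3 : A * τ ^ a * Φ (τ^k * r₀) ≤ (1/2 * u) * (M * u^k) := by
        apply mul_le_mul hτa ih hΦk (by positivity)
      have hBM : B * r₀ ^ b ≤ 1/2 * u * M := by
        have hcancel : u * u⁻¹ = 1 := mul_inv_cancel₀ hu0.ne'
        have : 1/2 * u * M = 1/2 * u * Φ r₀ + (u * u⁻¹) * (B * r₀ ^ b) := by
          rw [hM_def]; ring
        rw [this, hcancel]
        nlinarith [mul_nonneg hu0.le hΦr₀]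
      have h4 : B * (u^k * r₀ ^ b) ≤ (1/2 * u * M) * u^k := by
        have := mul_le_mul_of_nonneg_right hBM (pow_nonneg hu0.le k)
        calc B * (u^k * r₀ ^ b) = B * r₀ ^ b * u^k := by ring
          _ ≤ (1/2 * u * M) * u^k := this
      calc Φ (τ^(k+1) * r₀) ≤ A * τ ^ a * Φ (τ^k * r₀) + B * (u^k * r₀ ^ b) := h1
        _ ≤ (1/2 * u) * (M * u^k) + (1/2 * u * M) * u^k := add_le_add h3 h4
        _ = M * u^(k+1) := by ring
  -- choose the scale k
  have hexists : ∃ n : ℕ, τ^(n+1) * r₀ < r := by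
    obtain ⟨n, hn⟩ := exists_pow_lt_of_lt_one (div_pos hr0 hr₀) hτ1
    refine ⟨n, ?_⟩
    have h5 : τ^(n+1) ≤ τ^n := pow_le_pow_of_le_one hτ0.le hτ1.le (Nat.le_succ n)
    have h6 : τ^(n+1) < r / r₀ := lt_of_le_of_lt h5 hn
    calc τ^(n+1) * r₀ < (r / r₀) * r₀ := mul_lt_mul_of_pos_right h6 hr₀
      _ = r := by field_simp
  classical
  obtain ⟨k, hk, hmin⟩ : ∃ k : ℕ, τ^(k+1) * r₀ < r ∧ ∀ m < k, ¬(τ^(m+1) * r₀ < r) :=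
    ⟨Nat.find hexists, Nat.find_spec hexists, fun m hm => Nat.find_min hexists hm⟩
  have hrk : r ≤ τ^k * r₀ := by
    rcases Nat.eq_zero_or_pos k with h | h
    · rw [h]; simpa using hrr₀.le
    · obtain ⟨m, rfl⟩ := Nat.exists_eq_succ_of_ne_zero h.ne'
      have := hmin m (Nat.lt_succ_self m)
      push_neg at this
      exact this
  have hΦr : Φ r ≤ Φ (τ^k * r₀) := by
    apply hmono r ⟨hr0, le_trans hrk (hmem k).2⟩ (τ^k * r₀) (hmem k) hrk
  have hukb : u * u^k ≤ (r / r₀) ^ b := by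
    have h7 : τ^(k+1) < r / r₀ := by
      rw [← lt_div_iff₀ hr₀] at hk
      exact hk
    have h8 : (τ^(k+1) : ℝ) ^ b ≤ (r / r₀) ^ b :=
      Real.rpow_le_rpow (by positivity) h7.le hb.le
    rw [hpow (k+1)] at h8
    calc u * u^k = u^(k+1) := by ring
      _ ≤ (r / r₀) ^ b := h8
  have hukb' : u^k ≤ u⁻¹ * (r / r₀) ^ b := by
    rw [← mul_le_mul_iff_right₀ hu0]
    calc u * u^k ≤ (r / r₀) ^ b := hukb
      _ = u * (u⁻¹ * (r / r₀) ^ b) := by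
          rw [← mul_assoc, mul_inv_cancel₀ hu0.ne', one_mul]
  have hΦfinal : Φ r ≤ M * (u⁻¹ * (r / r₀) ^ b) :=
    le_trans hΦr (le_trans (key k) (mul_le_mul_of_nonneg_left hukb' hM0))
  -- rewrite and compare constants
  have hdiv : (r / r₀) ^ b = r ^ b * r₀ ^ (-b) := by
    rw [Real.div_rpow hr0.le hr₀.le, div_eq_mul_inv, Real.rpow_neg hr₀.le]
  have hst : r₀ ^ (-b) * r₀ ^ b = 1 := by
    rw [← Real.rpow_add hr₀]; simp
  have heq : M * (u⁻¹ * (r / r₀) ^ b)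
      = r ^ b * (u⁻¹ * (r₀ ^ (-b) * Φ r₀) + (2 * u⁻¹ * u⁻¹) * B) := by
    rw [hdiv, hM_def]
    linear_combination r ^ b * (2 * u⁻¹ * u⁻¹ * B) * hst
  have huC : u⁻¹ ≤ 2 * u⁻¹ * u⁻¹ := by
    have h9 : (1:ℝ) ≤ u⁻¹ := by
      nlinarith [mul_inv_cancel₀ hu0.ne', inv_pos.mpr hu0]
    nlinarith [inv_pos.mpr hu0]
  have hcomp : u⁻¹ * (r₀ ^ (-b) * Φ r₀) + (2 * u⁻¹ * u⁻¹) * B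
      ≤ (2 * u⁻¹ * u⁻¹) * (r₀ ^ (-b) * Φ r₀) + (2 * u⁻¹ * u⁻¹) * B := by
    have hnn : 0 ≤ r₀ ^ (-b) * Φ r₀ := by positivity
    exact add_le_add_left (mul_le_mul_of_nonneg_right huC hnn) _
  calc Φ r ≤ M * (u⁻¹ * (r / r₀) ^ b) := hΦfinal
    _ = r ^ b * (u⁻¹ * (r₀ ^ (-b) * Φ r₀) + (2 * u⁻¹ * u⁻¹) * B) := heq
    _ ≤ r ^ b * ((2 * u⁻¹ * u⁻¹) * (r₀ ^ (-b) * Φ r₀) + (2 * u⁻¹ * u⁻¹) * B) :=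
        mul_le_mul_of_nonneg_left hcomp (Real.rpow_nonneg hr0.le _)
    _ = 2 * u⁻¹ * u⁻¹ * r ^ b * (r₀ ^ (-b) * Φ r₀ + B) := by ring
end

section
/- Let Ω be a nonempty bounded open subset of ℝ^d and m ≥ 1 an integer. Then there exists a smooth function ξ with compact support in Ω such that ∫_Ω ξ(y) dy = 1 and ∫_Ω ξ(y) y^α dy = 0 for every multi-index α with 1 ≤ |α| ≤ m. -/
open MeasureTheory Metric Set Topology

noncomputable section

/-- The parabolic cylinder `Q_r(t₀,x₀) = (t₀ - r^{2m}, t₀) × B_r(x₀)`. -/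
def QCyl (d m : ℕ) (r : ℝ) (X : ℝ × EuclideanSpace ℝ (Fin d)) :
    Set (ℝ × EuclideanSpace ℝ (Fin d)) :=
  Set.Ioo (X.1 - r ^ (2 * m)) X.1 ×ˢ Metric.ball X.2 r

/-- The upper-half parabolic cylinder, `i` being the index of the normal direction. -/
def QCylP (d m : ℕ) (i : Fin d) (r : ℝ) (X : ℝ × EuclideanSpace ℝ (Fin d)) :
    Set (ℝ × EuclideanSpace ℝ (Fin d)) :=
  {p ∈ QCyl d m r X | 0 < p.2 i}

/-- Multi-indices of order exactly `k`. -/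
def MIdx (d k : ℕ) : Finset (Fin d → ℕ) :=
  (Fintype.piFinset fun _ : Fin d => Finset.range (k + 1)).filter fun γ => ∑ i, γ i = k

/-- Multi-indices of order at most `k`. -/
def MIdxLe (d k : ℕ) : Finset (Fin d → ℕ) :=
  (Fintype.piFinset fun _ : Fin d => Finset.range (k + 1)).filter fun γ => ∑ i, γ i ≤ k

/-- Multi-indices of order strictly less than `k`. -/
def MIdxLt (d k : ℕ) : Finset (Fin d → ℕ) :=
  (Fintype.piFinset fun _ : Fin d => Finset.range (k + 1)).filter fun γ => ∑ i, γ i < k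

variable {d n : ℕ} {F : Type*} [NormedAddCommGroup F] [NormedSpace ℝ F]

/-- Spatial partial derivative in the `i`-th coordinate direction. -/
def pder (i : Fin d) (u : ℝ × EuclideanSpace ℝ (Fin d) → F) :
    ℝ × EuclideanSpace ℝ (Fin d) → F :=
  fun p => fderiv ℝ (fun y => u (p.1, y)) p.2 (EuclideanSpace.single i 1)

/-- Multi-index spatial derivative `D^γ`. -/
def Dmul (γ : Fin d → ℕ) (u : ℝ × EuclideanSpace ℝ (Fin d) → F) :
    ℝ × EuclideanSpace ℝ (Fin d) → F :=
  (List.finRange d).foldr (fun i v => (pder i)^[γ i] v) u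

/-- Time derivative `∂_t`. -/
def tder (u : ℝ × EuclideanSpace ℝ (Fin d) → F) : ℝ × EuclideanSpace ℝ (Fin d) → F :=
  fun p => deriv (fun s => u (s, p.2)) p.1

/-- The set of difference quotients entering the spatial Hölder seminorm `[f]*_{a,D}`. -/
def sHolderSet (a : ℝ) (D : Set (ℝ × EuclideanSpace ℝ (Fin d)))
    (f : ℝ × EuclideanSpace ℝ (Fin d) → F) : Set ℝ :=
  {c | ∃ p ∈ D, ∃ q ∈ D, p.1 = q.1 ∧ p.2 ≠ q.2 ∧ c = ‖f p - f q‖ / dist p.2 q.2 ^ a}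

/-- The spatial Hölder seminorm `[f]*_{a,D}`. -/
def sHolder (a : ℝ) (D : Set (ℝ × EuclideanSpace ℝ (Fin d)))
    (f : ℝ × EuclideanSpace ℝ (Fin d) → F) : ℝ :=
  sSup (sHolderSet a D f)

/-- The set of difference quotients entering the parabolic Hölder seminorm `[f]_{σ,a,D}`. -/
def pHolderSet (σ a : ℝ) (D : Set (ℝ × EuclideanSpace ℝ (Fin d)))
    (f : ℝ × EuclideanSpace ℝ (Fin d) → F) : Set ℝ :=
  {c | ∃ p ∈ D, ∃ q ∈ D, p ≠ q ∧ c = ‖f p - f q‖ / (|p.1 - q.1| ^ σ + dist p.2 q.2 ^ a)}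

/-- The parabolic Hölder seminorm `[f]_{σ,a,D}`. -/
def pHolder (σ a : ℝ) (D : Set (ℝ × EuclideanSpace ℝ (Fin d)))
    (f : ℝ × EuclideanSpace ℝ (Fin d) → F) : ℝ :=
  sSup (pHolderSet σ a D f)

/-- The set of difference quotients entering the time Hölder seminorm `⟨f⟩_{σ,D}`. -/
def tHolderSet (σ : ℝ) (D : Set (ℝ × EuclideanSpace ℝ (Fin d)))
    (f : ℝ × EuclideanSpace ℝ (Fin d) → F) : Set ℝ :=
  {c | ∃ p ∈ D, ∃ q ∈ D, p.2 = q.2 ∧ p.1 ≠ q.1 ∧ c = ‖f p - f q‖ / |p.1 - q.1| ^ σ}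

/-- The time Hölder seminorm `⟨f⟩_{σ,D}`. -/
def tHolder (σ : ℝ) (D : Set (ℝ × EuclideanSpace ℝ (Fin d)))
    (f : ℝ × EuclideanSpace ℝ (Fin d) → F) : ℝ :=
  sSup (tHolderSet σ D f)

/-- The `L^∞` norm over a set. -/
def LpInf (D : Set (ℝ × EuclideanSpace ℝ (Fin d)))
    (f : ℝ × EuclideanSpace ℝ (Fin d) → F) : ℝ :=
  (eLpNorm f ⊤ (volume.restrict D)).toReal

/-- The `L²` norm over a set. -/
def L2Norm (D : Set (ℝ × EuclideanSpace ℝ (Fin d)))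
    (f : ℝ × EuclideanSpace ℝ (Fin d) → F) : ℝ :=
  (eLpNorm f 2 (volume.restrict D)).toReal

/-- The Legendre–Hadamard ellipticity condition with constant `lam`. -/
def LegHad (d n m : ℕ) (lam : ℝ)
    (B : (Fin d → ℕ) → (Fin d → ℕ) → Fin n → Fin n → ℝ) : Prop :=
  ∀ (ξ : Fin n → ℝ) (η : Fin d → ℝ),
    lam * (∑ i, ξ i ^ 2) * (∑ k, η k ^ 2) ^ m ≤
      ∑ α ∈ MIdx d m, ∑ β ∈ MIdx d m, ∑ i, ∑ j,
        B α β i j * ξ i * ξ j * ((∏ k, η k ^ α k) * ∏ k, η k ^ β k)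

end


lemma aux_contDiff (d : ℕ) (γ : Fin d → ℕ) :
    ContDiff ℝ (⊤ : ℕ∞) (fun y : EuclideanSpace ℝ (Fin d) => ∏ i, y i ^ γ i) :=
  contDiff_prod fun i _ => ContDiff.pow (f := fun y : EuclideanSpace ℝ (Fin d) => y i) ((EuclideanSpace.proj (𝕜 := ℝ) (ι := Fin d) i).contDiff) _

lemma aux_analytic (d : ℕ) (A : Finset (Fin d → ℕ)) (c : (Fin d → ℕ) → ℝ) :
    AnalyticOnNhd ℝ (fun y : EuclideanSpace ℝ (Fin d) => ∑ γ ∈ A, c γ * ∏ i, y i ^ γ i)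
      Set.univ := by
  refine Finset.analyticOnNhd_fun_sum _ fun γ _ => (analyticOnNhd_const (𝕜 := ℝ) (E := EuclideanSpace ℝ (Fin d)) (v := c γ)).mul ?_
  refine Finset.analyticOnNhd_fun_prod _ fun i _ => AnalyticOnNhd.pow ?_ _
  exact fun y _ => (EuclideanSpace.proj (𝕜 := ℝ) i).analyticAt y

lemma aux_nonvanish (d : ℕ) (A : Finset (Fin d → ℕ)) (c : (Fin d → ℕ) → ℝ)
    (γ₀ : Fin d → ℕ) (hγ₀ : γ₀ ∈ A) (hc : c γ₀ ≠ 0)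
    (x₀ : EuclideanSpace ℝ (Fin d)) (r : ℝ) (hr : 0 < r) :
    ∃ y ∈ Metric.ball x₀ r, (∑ γ ∈ A, c γ * ∏ i, y i ^ γ i) ≠ 0 := by
  by_contra h
  push_neg at h
  have hzero : ∀ y : EuclideanSpace ℝ (Fin d), (∑ γ ∈ A, c γ * ∏ i, y i ^ γ i) = 0 := by
    have H := (aux_analytic d A c).eqOn_zero_of_preconnected_of_eventuallyEq_zero
      isPreconnected_univ (Set.mem_univ x₀)
      (by filter_upwards [Metric.ball_mem_nhds x₀ hr] with y hy using h y hy)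
    exact fun y => H (Set.mem_univ y)
  set p : MvPolynomial (Fin d) ℝ :=
    ∑ γ ∈ A, MvPolynomial.monomial (Finsupp.equivFunOnFinite.symm γ) (c γ) with hp
  have heval : ∀ x : Fin d → ℝ, MvPolynomial.eval x p = ∑ γ ∈ A, c γ * ∏ i, x i ^ γ i := by
    intro x
    rw [hp, map_sum]
    refine Finset.sum_congr rfl fun γ _ => ?_
    rw [MvPolynomial.eval_monomial]
    congr 1
    rw [Finsupp.prod_fintype]
    · simp
    · intro i; exact pow_zero _
  have hp0 : p = 0 := by
    apply MvPolynomial.funext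
    intro x
    rw [heval, map_zero]
    exact hzero (WithLp.toLp 2 x)
  have : c γ₀ = 0 := by
    have h2 := congrArg (MvPolynomial.coeff (Finsupp.equivFunOnFinite.symm γ₀)) hp0
    rw [hp, MvPolynomial.coeff_zero, MvPolynomial.coeff_sum] at h2
    rw [Finset.sum_eq_single γ₀ ?_ (fun hn => absurd hγ₀ hn)] at h2
    · rwa [MvPolynomial.coeff_monomial, if_pos rfl] at h2
    · intro γ _ hne
      rw [MvPolynomial.coeff_monomial, if_neg]
      exact fun hEq => hne (Finsupp.equivFunOnFinite.symm.injective hEq)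
  exact hc this

/-- On a nonempty bounded open set `Ω ⊂ ℝ^d` there is a smooth function
with compact support in `Ω`, unit integral, and vanishing moments up to order `m`. -/
theorem statement_3 (d m : ℕ) (hd : 1 ≤ d) (hm : 1 ≤ m)
    (Ω : Set (EuclideanSpace ℝ (Fin d))) (hne : Ω.Nonempty) (hop : IsOpen Ω)
    (hbd : Bornology.IsBounded Ω) :
    ∃ ξ : EuclideanSpace ℝ (Fin d) → ℝ,
      ContDiff ℝ (⊤ : ℕ∞) ξ ∧ HasCompactSupport ξ ∧ tsupport ξ ⊆ Ω ∧
      (∫ y in Ω, ξ y) = 1 ∧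
      ∀ α : Fin d → ℕ, 1 ≤ ∑ i, α i → ∑ i, α i ≤ m →
        (∫ y in Ω, ξ y * ∏ i, y i ^ α i) = 0 := by
  classical
  obtain ⟨x₀, hx₀⟩ := hne
  obtain ⟨ε, hε, hball⟩ := Metric.isOpen_iff.mp hop x₀ hx₀
  let φ : ContDiffBump x₀ := ⟨ε/4, ε/2, by linarith, by linarith⟩
  have hφΩ : tsupport (φ : EuclideanSpace ℝ (Fin d) → ℝ) ⊆ Ω := by
    rw [φ.tsupport_eq]
    refine (Metric.closedBall_subset_ball (show φ.rOut < ε by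
      show ε/2 < ε; linarith)).trans hball
  set mono : (Fin d → ℕ) → EuclideanSpace ℝ (Fin d) → ℝ :=
    fun γ y => ∏ i, y i ^ γ i with hmono
  have hmc : ∀ γ, Continuous (mono γ) := by
    intro γ; rw [hmono]; exact (aux_contDiff d γ).continuous
  have hint : ∀ g : EuclideanSpace ℝ (Fin d) → ℝ, Continuous g →
      Integrable (fun y => φ y * g y) := fun g hg =>
    (φ.continuous.mul hg).integrable_of_hasCompactSupport (φ.hasCompactSupport.mul_right)
  set A : Finset (Fin d → ℕ) := MIdxLe d m with hA
  set G : Matrix A A ℝ := fun a b => ∫ y, φ y * (mono a y * mono b y) with hG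
  have hGab : ∀ a b : A, G a b = ∫ y, φ y * (mono a y * mono b y) := fun a b => by
    rw [hG]
  have key : ∀ x : A → ℝ, dotProduct x (Matrix.mulVec G x) =
      ∫ y, φ y * (∑ a : A, x a * mono a y) ^ 2 := by
    intro x
    have h1 : ∀ y, φ y * (∑ a : A, x a * mono a y) ^ 2 =
        ∑ a : A, ∑ b : A, x a * x b * (φ y * (mono a y * mono b y)) := by
      intro y
      rw [sq, Finset.sum_mul_sum, Finset.mul_sum]
      exact Finset.sum_congr rfl fun a _ => by
        rw [Finset.mul_sum]
        exact Finset.sum_congr rfl fun b _ => by ring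
    simp_rw [h1]
    rw [integral_finset_sum]
    · simp only [dotProduct, Matrix.mulVec]
      refine Finset.sum_congr rfl fun a _ => ?_
      rw [integral_finset_sum, Finset.mul_sum]
      · refine Finset.sum_congr rfl fun b _ => ?_
        rw [integral_const_mul, hGab]
        ring
      · exact fun b _ => ((hint _ ((hmc a).mul (hmc b))).const_mul _)
    · exact fun a _ =>
        integrable_finset_sum _ fun b _ => ((hint _ ((hmc a).mul (hmc b))).const_mul _)
  have hPos : G.PosDef := by
    rw [Matrix.posDef_iff_dotProduct_mulVec]
    constructor
    · refine Matrix.IsHermitian.ext fun a b => ?_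
      rw [star_trivial, hGab, hGab]
      congr 1; ext y; ring
    · intro x hx
      have hsx : star x = x := by funext a; simp
      rw [hsx, key x]
      obtain ⟨a₀, ha₀⟩ := Function.ne_iff.mp hx
      set cc : (Fin d → ℕ) → ℝ := fun γ => if h : γ ∈ A then x ⟨γ, h⟩ else 0 with hcc
      have hPeq : ∀ y, (∑ a : A, x a * mono a y) = ∑ γ ∈ A, cc γ * mono γ y := by
        intro y
        rw [← Finset.sum_coe_sort A (fun γ => cc γ * mono γ y)]
        exact Finset.sum_congr rfl fun a _ => by rw [hcc]; simp [a.2]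
      obtain ⟨y₁, hy₁ball, hy₁⟩ := aux_nonvanish d A cc a₀.1 a₀.2
        (by rw [hcc]; simpa [a₀.2] using ha₀) x₀ φ.rOut φ.rOut_pos
      have hy₁' : (∑ a : A, x a * mono a y₁) ≠ 0 := by
        rw [hPeq]; simp only [hmono]; exact hy₁
      have hPc : Continuous fun y => (∑ a : A, x a * mono (a : Fin d → ℕ) y) ^ 2 :=
        (continuous_finset_sum _ fun (a : A) _ =>
          (continuous_const.mul (hmc a.1) : Continuous fun y => x a * mono a.1 y)).pow 2
      have hfnn : ∀ y, 0 ≤ φ y * (∑ a : A, x a * mono (a : Fin d → ℕ) y) ^ 2 :=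
        fun y => mul_nonneg φ.nonneg (sq_nonneg _)
      have hfi : Integrable fun y => φ y * (∑ a : A, x a * mono (a : Fin d → ℕ) y) ^ 2 :=
        hint _ hPc
      rw [integral_pos_iff_support_of_nonneg hfnn hfi]
      have hU : IsOpen ((fun y => φ y * (∑ a : A, x a * mono (a : Fin d → ℕ) y) ^ 2) ⁻¹'
          Set.Ioi 0) := (φ.continuous.mul hPc).isOpen_preimage _ isOpen_Ioi
      have hy₁U : y₁ ∈ (fun y => φ y * (∑ a : A, x a * mono (a : Fin d → ℕ) y) ^ 2) ⁻¹'
          Set.Ioi 0 :=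
        mul_pos (φ.pos_of_mem_ball hy₁ball) (pow_two_pos_of_ne_zero hy₁')
      refine lt_of_lt_of_le (hU.measure_pos volume ⟨y₁, hy₁U⟩) (measure_mono ?_)
      exact fun y hy => ne_of_gt hy
  have hdet : IsUnit G.det := isUnit_iff_ne_zero.mpr hPos.det_pos.ne'
  set e0 : A → ℝ := fun a => if (a : Fin d → ℕ) = 0 then 1 else 0 with he0
  set cv : A → ℝ := Matrix.mulVec G⁻¹ e0 with hcv
  have hGc : Matrix.mulVec G cv = e0 := by
    rw [hcv, Matrix.mulVec_mulVec, Matrix.mul_nonsing_inv _ hdet, Matrix.one_mulVec]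
  set ξ : EuclideanSpace ℝ (Fin d) → ℝ :=
    fun y => (∑ a : A, cv a * mono a y) * φ y with hξ
  have hξsupp : tsupport ξ ⊆ tsupport (φ : EuclideanSpace ℝ (Fin d) → ℝ) :=
    closure_mono (Function.support_mul_subset_right _ _)
  have hmom : ∀ a : A, (∫ y in Ω, ξ y * mono a y) = e0 a := by
    intro a
    have hvan : ∀ y ∉ Ω, ξ y * mono a y = 0 := by
      intro y hy
      have hz : ξ y = 0 := by
        by_contra hne
        exact hy (hφΩ (hξsupp (subset_tsupport ξ (by simpa using hne))))
      rw [hz, zero_mul]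
    rw [setIntegral_eq_integral_of_forall_compl_eq_zero hvan]
    have h2 : ∀ y, ξ y * mono a y =
        ∑ b : A, cv b * (φ y * (mono a y * mono b y)) := by
      intro y
      simp only [hξ]
      rw [Finset.sum_mul, Finset.sum_mul]
      exact Finset.sum_congr rfl fun b _ => by ring
    simp_rw [h2]
    rw [integral_finset_sum]
    · have h3 : ∀ b : A, (∫ y, cv b * (φ y * (mono a y * mono b y))) = G a b * cv b := by
        intro b; rw [integral_const_mul, hGab]; ring
      rw [Finset.sum_congr rfl fun b _ => h3 b]
      have h4 := congrFun hGc a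
      simp only [Matrix.mulVec, dotProduct] at h4
      exact h4
    · exact fun b _ => ((hint _ ((hmc a).mul (hmc b))).const_mul _)
  have h0A : (0 : Fin d → ℕ) ∈ A := by
    simp [hA, MIdxLe, Fintype.mem_piFinset, Nat.succ_pos]
  refine ⟨ξ, ?_, ?_, hξsupp.trans hφΩ, ?_, ?_⟩
  · rw [hξ]
    refine ContDiff.mul ?_ φ.contDiff
    refine ContDiff.sum fun (a : A) _ => ?_
    simp only [hmono]
    exact (contDiff_const.mul (aux_contDiff d a.1) :
      ContDiff ℝ (⊤ : ℕ∞) fun y : EuclideanSpace ℝ (Fin d) => cv a * ∏ i, y i ^ (a : Fin d → ℕ) i)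
  · exact φ.hasCompactSupport.mul_left
  · have h5 := hmom ⟨0, h0A⟩
    simpa [hmono, he0] using h5
  · intro α h1 h2
    have hαA : α ∈ A := by
      rw [hA, MIdxLe, Finset.mem_filter, Fintype.mem_piFinset]
      refine ⟨fun i => Finset.mem_range.mpr (Nat.lt_succ_of_le ?_), h2⟩
      exact le_trans (Finset.single_le_sum (fun i _ => Nat.zero_le _) (Finset.mem_univ i)) h2
    have hα0 : α ≠ 0 := by
      intro h0
      rw [h0] at h1
      simp at h1
    have h5 := hmom ⟨α, hαA⟩
    simpa [hmono, he0, hα0] using h5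
end
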